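/- arXiv:1812.01751 — 2 statements merged into one kernel-verified Lean document; each statement's English description precedes it below -/
import Mathlib

section
/- The pdf of the distance between two independent points uniformly distributed in a disk of radius R, f_CI(r) = (4r/(π R^2)) arccos(r/(2R)) − (2r^2/(π R^4)) √(R^2 − r^2/4) for 0 ≤ r ≤ 2R, integrates to 1 over [0, 2R]. -/
open Real intervalIntegral Set

/-- The pdf of the distance between two independent uniform points in a disk of
radius `R` integrates to 1 over `[0, 2R]`. -/
theorem fCI_integrates_to_one (R : ℝ) (hR : 0 < R) :
    (∫ r in (0 : ℝ)..(2 * R),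
        (4 * r / (π * R ^ 2)) * Real.arccos (r / (2 * R))
          - (2 * r ^ 2 / (π * R ^ 4)) * Real.sqrt (R ^ 2 - r ^ 2 / 4)) = 1 := by
  have hπ : (0:ℝ) < π := Real.pi_pos
  set F : ℝ → ℝ := fun r =>
    2 * r ^ 2 / (π * R ^ 2) * Real.arccos (r / (2 * R))
      + 2 / π * Real.arcsin (r / (2 * R))
      - r * (2 * R ^ 2 + r ^ 2) / (4 * π * R ^ 4) * Real.sqrt (4 * R ^ 2 - r ^ 2)
    with hF
  have hcont : Continuous fun r : ℝ =>
      (4 * r / (π * R ^ 2)) * Real.arccos (r / (2 * R))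
        - (2 * r ^ 2 / (π * R ^ 4)) * Real.sqrt (R ^ 2 - r ^ 2 / 4) := by
    exact (Continuous.mul (by fun_prop) (Real.continuous_arccos.comp (by fun_prop))).sub
      (Continuous.mul (by fun_prop) (Real.continuous_sqrt.comp (by fun_prop)))
  have key : ∀ x ∈ Ioo (0:ℝ) (2*R), HasDerivAt F
      ((4 * x / (π * R ^ 2)) * Real.arccos (x / (2 * R))
        - (2 * x ^ 2 / (π * R ^ 4)) * Real.sqrt (R ^ 2 - x ^ 2 / 4)) x := by
    rintro x ⟨hx0, hx2⟩
    have hRne : (2*R) ≠ 0 := by positivity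
    have hu0 : (0:ℝ) < x / (2*R) := by positivity
    have hu1 : x / (2*R) < 1 := (div_lt_one (by linarith)).mpr hx2
    have hne1 : x / (2*R) ≠ -1 := by linarith
    have hne2 : x / (2*R) ≠ 1 := ne_of_lt hu1
    have h4 : (0:ℝ) < 4 * R ^ 2 - x ^ 2 := by nlinarith
    set s := Real.sqrt (4 * R ^ 2 - x ^ 2) with hs
    have hspos : 0 < s := Real.sqrt_pos.mpr h4
    have hs2 : s ^ 2 = 4 * R ^ 2 - x ^ 2 := Real.sq_sqrt h4.le
    have hu : Real.sqrt (1 - (x / (2*R)) ^ 2) = s / (2*R) := by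
      rw [show (1 - (x / (2*R)) ^ 2) = (4 * R ^ 2 - x ^ 2) / (2*R) ^ 2 by
        field_simp; ring]
      rw [Real.sqrt_div h4.le, Real.sqrt_sq (by linarith)]
    have hhalf : Real.sqrt (R ^ 2 - x ^ 2 / 4) = s / 2 := by
      rw [show (R ^ 2 - x ^ 2 / 4) = (4 * R ^ 2 - x ^ 2) / 2 ^ 2 by ring]
      rw [Real.sqrt_div h4.le, Real.sqrt_sq (by norm_num)]
    have hin : HasDerivAt (fun r : ℝ => r / (2*R)) (1 / (2*R)) x := by
      simpa using (hasDerivAt_id x).div_const (2*R)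
    have hA : HasDerivAt (fun r : ℝ => Real.arccos (r / (2*R)))
        (-(1 / Real.sqrt (1 - (x / (2*R)) ^ 2)) * (1 / (2*R))) x :=
      by have := (Real.hasDerivAt_arccos hne1 hne2).comp x hin; exact this
    have hB : HasDerivAt (fun r : ℝ => Real.arcsin (r / (2*R)))
        ((1 / Real.sqrt (1 - (x / (2*R)) ^ 2)) * (1 / (2*R))) x :=
      by have := (Real.hasDerivAt_arcsin hne1 hne2).comp x hin; exact this
    have hg : HasDerivAt (fun r : ℝ => 4 * R ^ 2 - r ^ 2) (-(2*x)) x := by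
      simpa using ((hasDerivAt_pow 2 x).const_sub (4 * R ^ 2))
    have hC : HasDerivAt (fun r : ℝ => Real.sqrt (4 * R ^ 2 - r ^ 2))
        (1 / (2 * s) * (-(2*x))) x :=
      (Real.hasDerivAt_sqrt (ne_of_gt h4)).comp x hg
    have h1 : HasDerivAt (fun r : ℝ => 2 * r ^ 2 / (π * R ^ 2)) (4 * x / (π * R ^ 2)) x := by
      have := ((hasDerivAt_pow 2 x).const_mul 2).div_const (π * R ^ 2)
      exact this.congr_deriv (by ring)
    have h3 : HasDerivAt (fun r : ℝ => r * (2 * R ^ 2 + r ^ 2) / (4 * π * R ^ 4))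
        ((2 * R ^ 2 + 3 * x ^ 2) / (4 * π * R ^ 4)) x := by
      have := ((hasDerivAt_id x).mul ((hasDerivAt_pow 2 x).const_add (2 * R ^ 2))).div_const
        (4 * π * R ^ 4)
      simp only [id_eq] at this
      exact this.congr_deriv (by ring)
    have hD := ((h1.mul hA).add (hB.const_mul (2 / π))).sub (h3.mul hC)
    refine hD.congr_deriv ?_
    symm
    rw [hu, hhalf]
    have e1 : (1:ℝ) / (s / (2*R)) = 2*R*s / (4*R^2 - x^2) := by
      rw [← hs2]; field_simp
    have e2 : (1:ℝ) / (2*s) = s / (2*(4*R^2-x^2)) := by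
      rw [← hs2]; field_simp
    rw [e1, e2]
    have h4ne : (4*R^2 - x^2) ≠ 0 := ne_of_gt h4
    field_simp
    ring
  have hle : (0:ℝ) ≤ 2 * R := by linarith
  have hFC : ContinuousOn F (Icc 0 (2*R)) := by
    apply Continuous.continuousOn
    simp only [hF]
    refine ((Continuous.mul (by fun_prop) (Real.continuous_arccos.comp (by fun_prop))).add
      (continuous_const.mul (Real.continuous_arcsin.comp (by fun_prop)))).sub
      (Continuous.mul (by fun_prop) (Real.continuous_sqrt.comp (by fun_prop)))
  have heq := intervalIntegral.integral_eq_sub_of_hasDerivAt_of_le hle hFC key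
    (hcont.intervalIntegrable _ _)
  have hRne : (2*R) ≠ 0 := by positivity
  rw [heq]
  simp only [hF]
  rw [div_self hRne, show (0:ℝ)/(2*R) = 0 by simp,
    show 4*R^2 - (2*R)^2 = 0 by ring]
  simp [Real.arccos_one, Real.arcsin_one, Real.arcsin_zero]
end

section
/- The CDF of the distance between two independent uniform points in a disk of radius R is Ψ(r) = (1/π)(4 arccsc(2R/r) + 2(r/R)^2 arcsec(2R/r) − 2 arctan(r/√(4R^2 − r^2)) − r(r^2 + 2R^2)√(4R^2 − r^2)/(4R^4)) for 0 ≤ r < 2R; i.e., Ψ(r) = ∫_0^r f_CI(t) dt with f_CI as defined, and Ψ(r) → 1 as r → 2R. -/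
open Real intervalIntegral Filter Topology

lemma arctan_sqrt_eq_arcsin (R r : ℝ) (hR : 0 < R) (h1 : -(2*R) < r) (h2 : r < 2*R) :
    Real.arctan (r / Real.sqrt (4*R^2 - r^2)) = Real.arcsin (r/(2*R)) := by
  have h2R : (0:ℝ) < 2*R := by linarith
  have hu1 : (-1:ℝ) < r/(2*R) := by rw [lt_div_iff₀ h2R]; linarith
  have hu2 : r/(2*R) < 1 := by rw [div_lt_one h2R]; linarith
  have hs : (0:ℝ) ≤ 4*R^2 - r^2 := by nlinarith
  have hsq : Real.sqrt (4*R^2 - r^2) = 2*R * Real.sqrt (1 - (r/(2*R))^2) := by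
    rw [show 4*R^2 - r^2 = (2*R)^2 * (1 - (r/(2*R))^2) by field_simp; ring,
      Real.sqrt_mul (by positivity), Real.sqrt_sq (by positivity)]
  rw [hsq, show r / (2*R * Real.sqrt (1 - (r/(2*R))^2))
      = (r/(2*R)) / Real.sqrt (1 - (r/(2*R))^2) by ring,
    ← Real.tan_arcsin, Real.arctan_tan
      (Real.neg_pi_div_two_lt_arcsin.mpr hu1) (Real.arcsin_lt_pi_div_two.mpr hu2)]

lemma hasDerivAt_F_aux (R : ℝ) (hR : 0 < R) (t : ℝ) (ht0 : 0 ≤ t) (ht2 : t < 2*R) :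
    HasDerivAt (fun x => (1/π) * (2*Real.arcsin (x/(2*R))
        + 8*(x/(2*R))^2 * Real.arccos (x/(2*R))
        - x*(x^2+2*R^2)*Real.sqrt (4*R^2 - x^2)/(4*R^4)))
      ((4*t/(π*R^2)) * Real.arccos (t/(2*R))
        - (2*t^2/(π*R^4)) * Real.sqrt (R^2 - t^2/4)) t := by
  have hpos : (0:ℝ) < 4*R^2 - t^2 := by nlinarith
  have h2R : (0:ℝ) < 2*R := by linarith
  have hu1 : (t/(2*R)) ≠ -1 := by
    have : (-1:ℝ) < t/(2*R) := by rw [lt_div_iff₀ h2R]; linarith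
    linarith
  have hu2 : (t/(2*R)) ≠ 1 := by
    have : t/(2*R) < 1 := by rw [div_lt_one h2R]; linarith
    linarith
  have hdiv : HasDerivAt (fun x : ℝ => x/(2*R)) (1/(2*R)) t := by
    simpa using (hasDerivAt_id t).div_const (2*R)
  have hA : HasDerivAt (fun x => Real.arcsin (x/(2*R)))
      (1/Real.sqrt (1-(t/(2*R))^2) * (1/(2*R))) t :=
    by have := (Real.hasDerivAt_arcsin hu1 hu2).comp t hdiv; exact this
  have hC : HasDerivAt (fun x => Real.arccos (x/(2*R)))
      (-(1/Real.sqrt (1-(t/(2*R))^2)) * (1/(2*R))) t :=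
    by have := (Real.hasDerivAt_arccos hu1 hu2).comp t hdiv; exact this
  have hin : HasDerivAt (fun x : ℝ => 4*R^2 - x^2) (-(2*t)) t := by
    simpa using ((hasDerivAt_pow 2 t).const_sub (4*R^2))
  have hS : HasDerivAt (fun x => Real.sqrt (4*R^2 - x^2))
      (-(2*t)/(2*Real.sqrt (4*R^2 - t^2))) t := hin.sqrt (ne_of_gt hpos)
  have h8 : HasDerivAt (fun x : ℝ => 8*(x/(2*R))^2)
      (8*((2:ℕ)*(t/(2*R))^1*(1/(2*R)))) t := (hdiv.pow 2).const_mul 8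
  have hp : HasDerivAt (fun x : ℝ => x*(x^2+2*R^2)) (1*(t^2+2*R^2) + t*((2:ℕ)*t^1)) t :=
    (hasDerivAt_id t).mul ((hasDerivAt_pow 2 t).add_const _)
  have htot := (((hA.const_mul 2).add (h8.mul hC)).sub
    ((hp.mul hS).div_const (4*R^4))).const_mul (1/π)
  refine htot.congr_deriv (Eq.symm ?_)
  have e1 : Real.sqrt (1 - (t/(2*R))^2) = Real.sqrt (4*R^2 - t^2)/(2*R) := by
    rw [show 1 - (t/(2*R))^2 = (4*R^2 - t^2)/(2*R)^2 by field_simp; ring,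
      Real.sqrt_div hpos.le, Real.sqrt_sq (by positivity)]
  have e2 : Real.sqrt (R^2 - t^2/4) = Real.sqrt (4*R^2 - t^2)/2 := by
    rw [show R^2 - t^2/4 = (4*R^2 - t^2)/2^2 by ring,
      Real.sqrt_div hpos.le, Real.sqrt_sq (by norm_num)]
  rw [e1, e2]
  set s := Real.sqrt (4*R^2 - t^2) with hsdef
  have hs0 : 0 < s := Real.sqrt_pos.mpr hpos
  have hs2 : s^2 = 4*R^2 - t^2 := Real.sq_sqrt hpos.le
  have hπ : π ≠ 0 := Real.pi_ne_zero
  field_simp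
  ring_nf
  linear_combination (8*R^2 - 4*t^2) * hs2

/-- The CDF of the distance between two independent uniform points in a disk of radius
`R` is `Ψ(r) = (1/π)(4 arccsc(2R/r) + 2(r/R)^2 arcsec(2R/r) − 2 arctan(r/√(4R^2 − r^2))
− r(r^2 + 2R^2)√(4R^2 − r^2)/(4R^4))` for `0 ≤ r < 2R` (where
`arccsc(2R/r) = arcsin(r/(2R))` and `arcsec(2R/r) = arccos(r/(2R))`), i.e.
`Ψ(r) = ∫_0^r f_CI(t) dt`, and `Ψ(r) → 1` as `r → 2R` from below. -/
theorem fCI_cdf (R : ℝ) (hR : 0 < R) :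
    (∀ r : ℝ, 0 ≤ r → r < 2 * R →
      (∫ t in (0 : ℝ)..r,
          (4 * t / (π * R ^ 2)) * Real.arccos (t / (2 * R))
            - (2 * t ^ 2 / (π * R ^ 4)) * Real.sqrt (R ^ 2 - t ^ 2 / 4))
        = (1 / π) * (4 * Real.arcsin (r / (2 * R))
            + 2 * (r / R) ^ 2 * Real.arccos (r / (2 * R))
            - 2 * Real.arctan (r / Real.sqrt (4 * R ^ 2 - r ^ 2))
            - r * (r ^ 2 + 2 * R ^ 2) * Real.sqrt (4 * R ^ 2 - r ^ 2) / (4 * R ^ 4))) ∧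
    Tendsto (fun r : ℝ => (1 / π) * (4 * Real.arcsin (r / (2 * R))
        + 2 * (r / R) ^ 2 * Real.arccos (r / (2 * R))
        - 2 * Real.arctan (r / Real.sqrt (4 * R ^ 2 - r ^ 2))
        - r * (r ^ 2 + 2 * R ^ 2) * Real.sqrt (4 * R ^ 2 - r ^ 2) / (4 * R ^ 4)))
      (nhdsWithin (2 * R) (Set.Iio (2 * R))) (nhds 1) := by
  have hπ : π ≠ 0 := Real.pi_ne_zero
  have hR' : R ≠ 0 := ne_of_gt hR
  constructor
  · intro r hr0 hr2
    rw [intervalIntegral.integral_eq_sub_of_hasDerivAt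
      (f := fun x => (1/π) * (2*Real.arcsin (x/(2*R))
        + 8*(x/(2*R))^2 * Real.arccos (x/(2*R))
        - x*(x^2+2*R^2)*Real.sqrt (4*R^2 - x^2)/(4*R^4)))
      (fun t ht => by
        rw [Set.uIcc_of_le hr0] at ht
        exact hasDerivAt_F_aux R hR t ht.1 (lt_of_le_of_lt ht.2 hr2))
      (by
        apply Continuous.intervalIntegrable
        continuity)]
    rw [arctan_sqrt_eq_arcsin R r hR (by linarith) hr2]
    simp only [zero_div, Real.arcsin_zero, Real.arccos_zero]
    ring
  · have hval : (1 / π) * (4 * Real.arcsin ((2*R) / (2 * R))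
        + 2 * ((2*R) / R) ^ 2 * Real.arccos ((2*R) / (2 * R))
        - 2 * Real.arcsin ((2*R) / (2 * R))
        - (2*R) * ((2*R) ^ 2 + 2 * R ^ 2) * Real.sqrt (4 * R ^ 2 - (2*R) ^ 2) / (4 * R ^ 4))
        = 1 := by
      rw [div_self (by positivity : (2*R) ≠ 0), Real.arcsin_one, Real.arccos_one,
        show 4 * R ^ 2 - (2*R) ^ 2 = 0 by ring, Real.sqrt_zero]
      field_simp
      ring
    have hcont : Tendsto (fun r : ℝ => (1 / π) * (4 * Real.arcsin (r / (2 * R))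
        + 2 * (r / R) ^ 2 * Real.arccos (r / (2 * R))
        - 2 * Real.arcsin (r / (2 * R))
        - r * (r ^ 2 + 2 * R ^ 2) * Real.sqrt (4 * R ^ 2 - r ^ 2) / (4 * R ^ 4)))
        (nhdsWithin (2 * R) (Set.Iio (2 * R))) (nhds 1) := by
      have hct : ContinuousAt (fun r : ℝ => (1 / π) * (4 * Real.arcsin (r / (2 * R))
          + 2 * (r / R) ^ 2 * Real.arccos (r / (2 * R))
          - 2 * Real.arcsin (r / (2 * R))
          - r * (r ^ 2 + 2 * R ^ 2) * Real.sqrt (4 * R ^ 2 - r ^ 2) / (4 * R ^ 4))) (2*R) := by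
        apply Continuous.continuousAt
        apply Continuous.mul continuous_const
        continuity
      have h := hct.tendsto.mono_left (nhdsWithin_le_nhds (s := Set.Iio (2*R)))
      simpa only [hval] using h
    apply hcont.congr'
    filter_upwards [self_mem_nhdsWithin,
      eventually_nhdsWithin_of_eventually_nhds (eventually_gt_nhds (by positivity : (0:ℝ) < 2*R))] with r hr hr0
    rw [arctan_sqrt_eq_arcsin R r hR (by linarith) hr]
end
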